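/- (Theorem 2, exponential form) Let θ ≥ 1 and let d, d̂ be real numbers satisfying σ(d̂) = q_θ(d), where σ(x) = 1/(1 + exp(−x)) and q_θ(d) = p_θ(d) + t_θ(d)/2. Then exp(d̂ − d) = (2θ + (1 + θ²)·exp(−d)) / (1 + θ² + 2θ·exp(−d)). -/
import Mathlib


open Real

noncomputable def pBTT (θ d : ℝ) : ℝ := 1 / (1 + θ * Real.exp (-d))

noncomputable def tBTT (θ d : ℝ) : ℝ :=
  (θ ^ 2 - 1) * Real.exp d / ((Real.exp d + θ) * (θ * Real.exp d + 1))

noncomputable def qBTT (θ d : ℝ) : ℝ := pBTT θ d + tBTT θ d / 2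

noncomputable def logistic (x : ℝ) : ℝ := 1 / (1 + Real.exp (-x))

theorem bias_exponential_form (θ d dhat : ℝ) (hθ : 1 ≤ θ)
    (h : logistic dhat = qBTT θ d) :
    Real.exp (dhat - d) =
      (2 * θ + (1 + θ ^ 2) * Real.exp (-d)) / (1 + θ ^ 2 + 2 * θ * Real.exp (-d)) := by
  have hθ0 : (0:ℝ) < θ := lt_of_lt_of_le one_pos hθ
  have hE : 0 < Real.exp d := Real.exp_pos d
  have hY : 0 < Real.exp dhat := Real.exp_pos dhat
  have he : 0 < Real.exp (-d) := Real.exp_pos _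
  have hey : 0 < Real.exp (-dhat) := Real.exp_pos _
  unfold logistic qBTT pBTT tBTT at h
  rw [Real.exp_sub]
  rw [Real.exp_neg] at h ⊢
  rw [Real.exp_neg d] at h
  have h1 : (1:ℝ) + (Real.exp dhat)⁻¹ ≠ 0 := by positivity
  have h2 : (1:ℝ) + θ * (Real.exp d)⁻¹ ≠ 0 := by positivity
  have h3 : Real.exp d + θ ≠ 0 := by positivity
  have h4 : θ * Real.exp d + 1 ≠ 0 := by positivity
  have h5 : (1:ℝ) + θ ^ 2 + 2 * θ * (Real.exp d)⁻¹ ≠ 0 := by positivity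
  have hE' : Real.exp d ≠ 0 := ne_of_gt hE
  have hY' : Real.exp dhat ≠ 0 := ne_of_gt hY
  field_simp at h ⊢
  nlinarith [h, sq_nonneg (Real.exp d), mul_pos hE hY]
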